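/- Let F be a field and A an infinite-dimensional locally matrix algebra over F of countable dimension. Then dim_F Der(A) = |F|^{ℵ₀} and dim_F Outder(A) = |F|^{ℵ₀}, where |F|^{ℵ₀} denotes cardinal exponentiation of the cardinality of F by the countable cardinal ℵ₀. -/

import Mathlib

/-- A (not necessarily unital) associative algebra `A` over a field `F` is a *locally matrix
algebra* if every finite subset of `A` is contained in a subalgebra of `A` that is isomorphic
to a matrix algebra `Mₙ(F)` for some `n ≥ 1`. -/
def IsLocallyMatrix (F A : Type*) [Field F] [NonUnitalRing A] [Module F A]
    [SMulCommClass F A A] [IsScalarTower F A A] : Prop :=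
  ∀ s : Finset A, ∃ (B : NonUnitalSubalgebra F A) (n : ℕ), 0 < n ∧ (s : Set A) ⊆ (B : Set A) ∧
    ∃ f : B →ₙₐ[F] Matrix (Fin n) (Fin n) F, Function.Bijective f

/-- The space `Der(A)` of derivations of `A`, as a submodule of the `F`-linear endomorphisms
of `A`. -/
def derSubmodule (F A : Type*) [Field F] [NonUnitalRing A] [Module F A]
    [SMulCommClass F A A] [IsScalarTower F A A] : Submodule F (Module.End F A) where
  carrier := {d | ∀ x y : A, d (x * y) = d x * y + x * d y}
  add_mem' := by
    intro d e hd he x y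
    simp only [LinearMap.add_apply, hd x y, he x y, add_mul, mul_add]
    abel
  zero_mem' := by intro x y; simp
  smul_mem' := by
    intro c d hd x y
    simp only [LinearMap.smul_apply, hd x y, smul_add, smul_mul_assoc, mul_smul_comm]

/-- The inner derivation `ad(b) : x ↦ b x - x b` as a linear endomorphism of `A`. -/
def adEnd (F A : Type*) [Field F] [NonUnitalRing A] [Module F A]
    [SMulCommClass F A A] [IsScalarTower F A A] (b : A) : Module.End F A :=
  LinearMap.mulLeft F b - LinearMap.mulRight F b

/-- The subspace `Inder(A)` of inner derivations inside `Der(A)`. -/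
def innerSubmodule (F A : Type*) [Field F] [NonUnitalRing A] [Module F A]
    [SMulCommClass F A A] [IsScalarTower F A A] : Submodule F (derSubmodule F A) where
  carrier := {d | ∃ b : A, (d : Module.End F A) = adEnd F A b}
  add_mem' := by
    rintro d e ⟨b, hb⟩ ⟨c, hc⟩
    refine ⟨b + c, ?_⟩
    ext x
    simp [hb, hc, adEnd, add_mul, mul_add]
    abel
  zero_mem' := ⟨0, by ext x; simp [adEnd]⟩
  smul_mem' := by
    rintro c d ⟨b, hb⟩
    refine ⟨c • b, ?_⟩
    have : ((c • d : derSubmodule F A) : Module.End F A) = c • (d : Module.End F A) := rfl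
    ext x
    simp [this, LinearMap.smul_apply, hb, adEnd, smul_mul_assoc, mul_smul_comm, smul_sub]

/-- The quotient space `Outder(A) = Der(A)/Inder(A)` of outer derivations of `A`. -/
abbrev outderSpace (F A : Type*) [Field F] [NonUnitalRing A] [Module F A]
    [SMulCommClass F A A] [IsScalarTower F A A] : Type _ :=
  derSubmodule F A ⧸ innerSubmodule F A


open Cardinal

set_option linter.unusedSectionVars false

section LMP

universe u v

variable {F : Type u} {A : Type v} [Field F] [NonUnitalRing A] [Module F A]
  [SMulCommClass F A A] [IsScalarTower F A A]

/-- `B` is a matrix subalgebra. -/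
def IsMatrixSub (F : Type u) {A : Type v} [Field F] [NonUnitalRing A] [Module F A]
    [SMulCommClass F A A] [IsScalarTower F A A] (B : NonUnitalSubalgebra F A) : Prop :=
  ∃ n : ℕ, 0 < n ∧ ∃ f : B →ₙₐ[F] Matrix (Fin n) (Fin n) F, Function.Bijective f

/-- `e` is a (two-sided) unit of the subalgebra `B`. -/
def IsUnitOf (B : NonUnitalSubalgebra F A) (e : A) : Prop :=
  e ∈ B ∧ ∀ x ∈ B, e * x = x ∧ x * e = x

lemma isUnitOf_unique {B : NonUnitalSubalgebra F A} {e e' : A}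
    (he : IsUnitOf B e) (he' : IsUnitOf B e') : e = e' := by
  have h1 : e * e' = e := (he'.2 e he.1).2
  have h2 : e * e' = e' := (he.2 e' he'.1).1
  rw [← h1, h2]

lemma exists_isUnitOf {B : NonUnitalSubalgebra F A} (hB : IsMatrixSub F B) :
    ∃ e, IsUnitOf B e := by
  obtain ⟨n, hn, f, hf⟩ := hB
  set g := (Equiv.ofBijective f hf).symm with hg
  have hfg : ∀ m, f (g m) = m := (Equiv.ofBijective f hf).apply_symm_apply
  refine ⟨(g 1 : A), (g 1).2, fun x hx => ?_⟩
  constructor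
  · have h : f (g 1 * ⟨x, hx⟩) = f ⟨x, hx⟩ := by rw [map_mul, hfg, one_mul]
    exact congrArg Subtype.val (hf.1 h)
  · have h : f (⟨x, hx⟩ * g 1) = f ⟨x, hx⟩ := by rw [map_mul, hfg, mul_one]
    exact congrArg Subtype.val (hf.1 h)

lemma isUnitOf_ne_zero {B : NonUnitalSubalgebra F A} (hB : IsMatrixSub F B) {e : A}
    (he : IsUnitOf B e) : e ≠ 0 := by
  obtain ⟨n, hn, f, hf⟩ := hB
  set g := (Equiv.ofBijective f hf).symm with hg
  have hfg : ∀ m, f (g m) = m := (Equiv.ofBijective f hf).apply_symm_apply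
  intro h0
  have h1 : ((g 1 : B) : A) = e * ((g 1 : B) : A) := ((he.2 _ (g 1).2).1).symm
  rw [h0, zero_mul] at h1
  have h2 : (g 1 : B) = 0 := Subtype.ext h1
  have h3 : (1 : Matrix (Fin n) (Fin n) F) = 0 := by
    rw [← hfg 1, h2, map_zero]
  have := congrFun (congrFun h3 ⟨0, hn⟩) ⟨0, hn⟩
  simp [Matrix.one_apply] at this

lemma eq_smul_unit_of_comm {B : NonUnitalSubalgebra F A} (hB : IsMatrixSub F B) {e : A}
    (he : IsUnitOf B e) {z : A} (hz : z ∈ B) (hc : ∀ x ∈ B, z * x = x * z) :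
    ∃ μ : F, z = μ • e := by
  obtain ⟨n, hn, f, hf⟩ := hB
  set g := (Equiv.ofBijective f hf).symm with hg
  have hfg : ∀ m, f (g m) = m := (Equiv.ofBijective f hf).apply_symm_apply
  have hcomm : ∀ m : Matrix (Fin n) (Fin n) F, Commute m (f ⟨z, hz⟩) := by
    intro m
    show m * f ⟨z, hz⟩ = f ⟨z, hz⟩ * m
    calc m * f ⟨z, hz⟩ = f (g m * ⟨z, hz⟩) := by rw [map_mul, hfg]
      _ = f (⟨z, hz⟩ * g m) := by
          congr 1
          exact Subtype.ext (hc _ (g m).2).symm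
      _ = f ⟨z, hz⟩ * m := by rw [map_mul, hfg]
  obtain ⟨r, hr⟩ := Matrix.mem_range_scalar_of_commute_single
    (M := f ⟨z, hz⟩) (fun i j _ => hcomm _)
  -- identify e with g 1
  have hu : IsUnitOf B ((g 1 : B) : A) := by
    refine ⟨(g 1).2, fun x hx => ?_⟩
    constructor
    · have h : f (g 1 * ⟨x, hx⟩) = f ⟨x, hx⟩ := by rw [map_mul, hfg, one_mul]
      exact congrArg Subtype.val (hf.1 h)
    · have h : f (⟨x, hx⟩ * g 1) = f ⟨x, hx⟩ := by rw [map_mul, hfg, mul_one]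
      exact congrArg Subtype.val (hf.1 h)
  have heg : e = ((g 1 : B) : A) := isUnitOf_unique he hu
  refine ⟨r, ?_⟩
  have hfz : f ⟨z, hz⟩ = f (r • g 1) := by
    rw [map_smul, hfg, ← hr]
    ext i j
    by_cases h : i = j <;>
      simp [Matrix.scalar_apply, Matrix.smul_apply, Matrix.one_apply, h]
  have := hf.1 hfz
  rw [heg]
  calc z = ((⟨z, hz⟩ : B) : A) := rfl
    _ = ((r • g 1 : B) : A) := congrArg Subtype.val this
    _ = r • ((g 1 : B) : A) := rfl

lemma exists_span_finset {B : NonUnitalSubalgebra F A} (hB : IsMatrixSub F B) :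
    ∃ t : Finset A, ↑t ⊆ (B : Set A) ∧
      ∀ x ∈ B, x ∈ Submodule.span F (↑t : Set A) := by
  obtain ⟨n, hn, f, hf⟩ := hB
  set g := (Equiv.ofBijective f hf).symm with hg
  have hfg : ∀ m, f (g m) = m := (Equiv.ofBijective f hf).apply_symm_apply
  have hdec : ∀ x : B, (x : A) =
      ∑ i, ∑ j, f x i j • ((g (Matrix.single i j 1) : B) : A) := by
    intro x
    have h1 : x = ∑ i, ∑ j, f x i j • g (Matrix.single i j 1) := by
      apply hf.1
      simp only [map_sum, map_smul, hfg, Matrix.smul_single, smul_eq_mul, mul_one]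
      exact Matrix.matrix_eq_sum_single _
    calc (x : A) = ((∑ i, ∑ j, f x i j • g (Matrix.single i j 1) : B) : A) := by
          rw [← h1]
      _ = _ := by
        rw [AddSubmonoidClass.coe_finset_sum]
        exact Finset.sum_congr rfl fun i _ => by
          rw [AddSubmonoidClass.coe_finset_sum]
          exact Finset.sum_congr rfl fun j _ => rfl
  classical
  refine ⟨(Finset.univ : Finset (Fin n × Fin n)).image
      (fun p => ((g (Matrix.single p.1 p.2 1) : B) : A)), ?_, ?_⟩
  · intro x hx
    simp only [Finset.coe_image] at hx
    obtain ⟨p, _, rfl⟩ := hx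
    exact (g _).2
  · intro x hx
    have hd := hdec ⟨x, hx⟩
    rw [show x = ((⟨x, hx⟩ : B) : A) from rfl, hd]
    refine sum_mem fun i _ => sum_mem fun j _ => Submodule.smul_mem _ _ ?_
    apply Submodule.subset_span
    simp only [Finset.coe_image]
    exact ⟨(i, j), by simp⟩

lemma exists_commutant_not_mem {B : NonUnitalSubalgebra F A} (hB : IsMatrixSub F B) {e : A}
    (he : IsUnitOf B e) (heA : ∀ x : A, e * x = x ∧ x * e = x) {a : A} (ha : a ∉ B) :
    ∃ c : A, c ∉ B ∧ ∀ x ∈ B, c * x = x * c := by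
  obtain ⟨n, hn, f, hf⟩ := hB
  set g := (Equiv.ofBijective f hf).symm with hg
  have hfg : ∀ m, f (g m) = m := (Equiv.ofBijective f hf).apply_symm_apply
  have hgmul : ∀ m m', g m * g m' = g (m * m') := by
    intro m m'; apply hf.1; rw [map_mul, hfg, hfg, hfg]
  have hg0 : ((g 0 : B) : A) = 0 := by
    have : g 0 = 0 := by apply hf.1; rw [hfg, map_zero]
    rw [this]; rfl
  set E : Fin n → Fin n → A := fun i j => ((g (Matrix.single i j 1) : B) : A) with hE
  have hEB : ∀ i j, E i j ∈ B := fun i j => (g _).2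
  have hmul_same : ∀ i j k, E i j * E j k = E i k := by
    intro i j k
    show ((g _ * g _ : B) : A) = _
    rw [hgmul, Matrix.single_mul_single_same, one_mul]
  have hmul_ne : ∀ (i j k l : Fin n), j ≠ k → E i j * E k l = 0 := by
    intro i j k l hjk
    show ((g _ * g _ : B) : A) = 0
    rw [hgmul, Matrix.single_mul_single_of_ne (h := hjk), hg0]
  have hdec : ∀ x : B, (x : A) = ∑ i, ∑ j, f x i j • E i j := by
    intro x
    have h1 : x = ∑ i, ∑ j, f x i j • g (Matrix.single i j 1) := by
      apply hf.1
      simp only [map_sum, map_smul, hfg, Matrix.smul_single, smul_eq_mul, mul_one]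
      exact Matrix.matrix_eq_sum_single _
    calc (x : A) = ((∑ i, ∑ j, f x i j • g (Matrix.single i j 1) : B) : A) := by
          rw [← h1]
      _ = _ := by
        rw [AddSubmonoidClass.coe_finset_sum]
        exact Finset.sum_congr rfl fun i _ => by
          rw [AddSubmonoidClass.coe_finset_sum]
          exact Finset.sum_congr rfl fun j _ => rfl
  -- the sum of diagonal matrix units is the unit of B
  have hesum : (∑ i, E i i) = e := by
    have hone : (1 : Matrix (Fin n) (Fin n) F) = ∑ i, Matrix.single i i 1 := by
      ext i j
      rw [Matrix.sum_apply]
      by_cases h : i = j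
      · subst h
        rw [Matrix.one_apply_eq, Finset.sum_eq_single_of_mem i (Finset.mem_univ i)]
        · rw [Matrix.single_apply_same]
        · intro k _ hk
          exact Matrix.single_apply_of_ne _ _ _ _ _ (fun hc => hk hc.1)
      · rw [Matrix.one_apply_ne h, Finset.sum_eq_zero]
        intro k _
        exact Matrix.single_apply_of_ne _ _ _ _ _
          (fun hc => h (hc.1.symm.trans hc.2))
    have h1 : (∑ i, g (Matrix.single i i 1)) = g 1 := by
      apply hf.1
      simp only [map_sum, hfg]
      exact hone.symm
    have hu : IsUnitOf B ((g 1 : B) : A) := by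
      refine ⟨(g 1).2, fun x hx => ?_⟩
      constructor
      · have h : f (g 1 * ⟨x, hx⟩) = f ⟨x, hx⟩ := by rw [map_mul, hfg, one_mul]
        exact congrArg Subtype.val (hf.1 h)
      · have h : f (⟨x, hx⟩ * g 1) = f ⟨x, hx⟩ := by rw [map_mul, hfg, mul_one]
        exact congrArg Subtype.val (hf.1 h)
    calc (∑ i, E i i) = ((∑ i, g (Matrix.single i i 1) : B) : A) := by
          rw [AddSubmonoidClass.coe_finset_sum]
      _ = ((g 1 : B) : A) := by rw [h1]
      _ = e := (isUnitOf_unique he hu).symm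
  -- the candidate commutant elements
  set c : Fin n → Fin n → A := fun i j => ∑ k, E k i * a * E j k with hc
  have hcEl : ∀ i j p q, c i j * E p q = E p i * a * E j q := by
    intro i j p q
    rw [hc]
    simp only
    rw [Finset.sum_mul]
    rw [Finset.sum_eq_single_of_mem p (Finset.mem_univ p)]
    · rw [mul_assoc (E p i * a), hmul_same]
    · intro k _ hk
      rw [mul_assoc (E k i * a), hmul_ne _ _ _ _ hk, mul_zero]
  have hcEr : ∀ i j p q, E p q * c i j = E p i * a * E j q := by
    intro i j p q
    rw [hc]
    simp only
    rw [Finset.mul_sum]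
    rw [Finset.sum_eq_single_of_mem q (Finset.mem_univ q)]
    · rw [show E p q * (E q i * a * E j q) = (E p q * E q i) * (a * E j q) by
        rw [mul_assoc (E p q), mul_assoc (E q i)], hmul_same, mul_assoc]
    · intro k _ hk
      rw [show E p q * (E k i * a * E j k) = (E p q * E k i) * (a * E j k) by
        rw [mul_assoc (E p q), mul_assoc (E k i)], hmul_ne _ _ _ _ (Ne.symm hk), zero_mul]
  have hccomm : ∀ i j, ∀ x ∈ B, c i j * x = x * c i j := by
    intro i j x hx
    have hd := hdec ⟨x, hx⟩
    rw [show x = ((⟨x, hx⟩ : B) : A) from rfl, hd, Finset.mul_sum, Finset.sum_mul]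
    refine Finset.sum_congr rfl fun p _ => ?_
    rw [Finset.mul_sum, Finset.sum_mul]
    refine Finset.sum_congr rfl fun q _ => ?_
    rw [mul_smul_comm, smul_mul_assoc, hcEl, hcEr]
  -- reconstruction of a
  have hrec : a = ∑ i, ∑ j, c i j * E i j := by
    have h2 : ∀ i j, c i j * E i j = E i i * a * E j j := fun i j => hcEl i j i j
    calc a = (e * a) * e := by rw [(heA a).1, (heA a).2]
      _ = ((∑ i, E i i) * a) * (∑ j, E j j) := by rw [hesum]
      _ = ∑ i, ∑ j, (E i i * a) * E j j := by
          rw [Finset.sum_mul, Finset.sum_mul]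
          refine Finset.sum_congr rfl fun i _ => ?_
          rw [Finset.mul_sum]
      _ = ∑ i, ∑ j, c i j * E i j := by
          refine Finset.sum_congr rfl fun i _ => Finset.sum_congr rfl fun j _ => ?_
          rw [h2]
  rcases Classical.em (∃ i j, c i j ∉ B) with ⟨i, j, hij⟩ | hall
  · exact ⟨c i j, hij, hccomm i j⟩
  · exfalso
    push_neg at hall
    exact ha (hrec ▸ sum_mem fun i _ => sum_mem fun j _ =>
      mul_mem (hall i j) (hEB i j))

lemma exists_ext (hA : IsLocallyMatrix F A) {B : NonUnitalSubalgebra F A}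
    (hB : IsMatrixSub F B) (s : Finset A) :
    ∃ B' : NonUnitalSubalgebra F A, IsMatrixSub F B' ∧ B ≤ B' ∧ (↑s : Set A) ⊆ B' := by
  classical
  obtain ⟨t, htB, hspan⟩ := exists_span_finset hB
  obtain ⟨B', n, hn, hsub, f, hf⟩ := hA (t ∪ s)
  refine ⟨B', ⟨n, hn, f, hf⟩, ?_, ?_⟩
  · intro x hx
    have h1 : x ∈ Submodule.span F (↑t : Set A) := hspan x hx
    have h2 : Submodule.span F (↑t : Set A) ≤ B'.toSubmodule := by
      apply Submodule.span_le.mpr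
      intro y hy
      exact hsub (by simp [hy])
    exact h2 h1
  · intro y hy
    exact hsub (by simp [hy])

lemma exists_not_mem (hinf : ¬ Module.Finite F A) {B : NonUnitalSubalgebra F A}
    (hB : IsMatrixSub F B) : ∃ a : A, a ∉ B := by
  by_contra h
  push_neg at h
  apply hinf
  obtain ⟨t, htB, hspan⟩ := exists_span_finset hB
  refine Module.finite_def.mpr ⟨t, ?_⟩
  rw [eq_top_iff]
  exact fun x _ => hspan x (h x)

lemma step_lemma (hA : IsLocallyMatrix F A) (hinf : ¬ Module.Finite F A)
    (B : NonUnitalSubalgebra F A) (hB : IsMatrixSub F B) (s : Finset A) :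
    ∃ B' : NonUnitalSubalgebra F A, IsMatrixSub F B' ∧ B ≤ B' ∧ (↑s : Set A) ⊆ B' ∧
      ∃ c e e' : A, IsUnitOf B e ∧ IsUnitOf B' e' ∧ c ∈ B' ∧
        (∀ x ∈ B, c * x = x * c) ∧ ∀ α β : F, c ≠ α • e + β • e' := by
  classical
  obtain ⟨e, he⟩ := exists_isUnitOf hB
  by_cases hglob : ∀ x : A, e * x = x ∧ x * e = x
  · -- e is a global unit: use a non-central commutant element
    obtain ⟨a, ha⟩ := exists_not_mem hinf hB
    obtain ⟨c, hcB, hccomm⟩ := exists_commutant_not_mem hB he hglob ha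
    obtain ⟨B', hB', hle, hsub⟩ := exists_ext hA hB (s ∪ {c})
    obtain ⟨e', he'⟩ := exists_isUnitOf hB'
    have hee' : e' = e := by
      have h1 : e' * e = e' := (hglob e').2
      have h2 : e' * e = e := (he'.2 e (hle he.1)).1
      exact h1.symm.trans h2
    refine ⟨B', hB', hle, fun y hy => hsub (by simp [hy]), c, e, e', he, he',
      hsub (by simp), hccomm, ?_⟩
    intro α β hc
    apply hcB
    rw [hc, hee']
    exact add_mem (SMulMemClass.smul_mem _ he.1) (SMulMemClass.smul_mem _ he.1)
  · push_neg at hglob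
    obtain ⟨a, hae⟩ := hglob
    obtain ⟨B₁, hB₁, hle₁, hsub₁⟩ := exists_ext hA hB (s ∪ {a})
    obtain ⟨e₁, he₁⟩ := exists_isUnitOf hB₁
    have haB₁ : a ∈ B₁ := hsub₁ (by simp)
    have hane : e₁ ≠ e := by
      intro h
      exact hae (by rw [← h]; exact (he₁.2 a haB₁).1)
        (by rw [← h]; exact (he₁.2 a haB₁).2)
    by_cases hglob₁ : ∀ x : A, e₁ * x = x ∧ x * e₁ = x
    · -- e₁ is a global unit
      obtain ⟨a₁, ha₁⟩ := exists_not_mem hinf hB₁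
      obtain ⟨c, hcB₁, hccomm₁⟩ := exists_commutant_not_mem hB₁ he₁ hglob₁ ha₁
      obtain ⟨B₂, hB₂, hle₂, hsub₂⟩ := exists_ext hA hB₁ {c}
      obtain ⟨e₂, he₂⟩ := exists_isUnitOf hB₂
      have he₂e₁ : e₂ = e₁ := by
        have h1 : e₂ * e₁ = e₂ := (hglob₁ e₂).2
        have h2 : e₂ * e₁ = e₁ := (he₂.2 e₁ (hle₂ he₁.1)).1
        exact h1.symm.trans h2
      refine ⟨B₂, hB₂, le_trans hle₁ hle₂,
        fun y hy => hle₂ (hsub₁ (by simp [hy])), c, e, e₂, he, he₂,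
        hsub₂ (by simp), fun x hx => hccomm₁ x (hle₁ hx), ?_⟩
      intro α β hc
      apply hcB₁
      rw [hc, he₂e₁]
      exact add_mem (SMulMemClass.smul_mem _ (hle₁ he.1)) (SMulMemClass.smul_mem _ he₁.1)
    · -- neither e nor e₁ is a global unit
      push_neg at hglob₁
      obtain ⟨a₁, hae₁⟩ := hglob₁
      obtain ⟨B₂, hB₂, hle₂, hsub₂⟩ := exists_ext hA hB₁ {a₁}
      obtain ⟨e₂, he₂⟩ := exists_isUnitOf hB₂
      have ha₁B₂ : a₁ ∈ B₂ := hsub₂ (by simp)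
      have hane₁ : e₂ ≠ e₁ := by
        intro h
        exact hae₁ (by rw [← h]; exact (he₂.2 a₁ ha₁B₂).1)
          (by rw [← h]; exact (he₂.2 a₁ ha₁B₂).2)
      have heB₁ : e ∈ B₁ := hle₁ he.1
      have heB₂ : e ∈ B₂ := hle₂ heB₁
      refine ⟨B₂, hB₂, le_trans hle₁ hle₂,
        fun y hy => hle₂ (hsub₁ (by simp [hy])), e₁ - e, e, e₂, he, he₂,
        sub_mem (hle₂ he₁.1) heB₂, ?_, ?_⟩
      · intro x hx
        have h1 : e₁ * x = x := (he₁.2 x (hle₁ hx)).1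
        have h2 : x * e₁ = x := (he₁.2 x (hle₁ hx)).2
        have h3 : e * x = x := (he.2 x hx).1
        have h4 : x * e = x := (he.2 x hx).2
        rw [sub_mul, mul_sub, h1, h2, h3, h4]
      · intro α β hc
        have he0 : e ≠ 0 := isUnitOf_ne_zero hB he
        have hee : e * e = e := (he.2 e he.1).1
        have hee₁ : e * e₁ = e := (he₁.2 e heB₁).2
        have he₁e₁ : e₁ * e₁ = e₁ := (he₁.2 e₁ he₁.1).1
        have he₁e : e₁ * e = e := (he₁.2 e heB₁).1
        have hee₂ : e * e₂ = e := (he₂.2 e heB₂).2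
        have he₁e₂ : e₁ * e₂ = e₁ := (he₂.2 e₁ (hle₂ he₁.1)).2
        have h1 : (0 : A) = (α + β) • e := by
          calc (0 : A) = e * (e₁ - e) := by rw [mul_sub, hee₁, hee, sub_self]
            _ = e * (α • e + β • e₂) := by rw [hc]
            _ = (α + β) • e := by
                rw [mul_add, mul_smul_comm, mul_smul_comm, hee, hee₂, add_smul]
        have hαβ : α + β = 0 := (smul_eq_zero.mp h1.symm).resolve_right he0
        have hβ : β = -α := eq_neg_of_add_eq_zero_right hαβ
        have h2 : e₁ - e = α • (e - e₁) := by
          calc e₁ - e = e₁ * (e₁ - e) := by rw [mul_sub, he₁e₁, he₁e]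
            _ = e₁ * (α • e + β • e₂) := by rw [hc]
            _ = α • e + β • e₁ := by
                rw [mul_add, mul_smul_comm, mul_smul_comm, he₁e, he₁e₂]
            _ = α • (e - e₁) := by rw [hβ, neg_smul, smul_sub]; abel
        have h3 : (1 + α) • (e₁ - e) = 0 := by
          calc (1 + α) • (e₁ - e) = (e₁ - e) + α • (e₁ - e) := by rw [add_smul, one_smul]
            _ = (e₁ - e) + -(α • (e - e₁)) := by rw [← smul_neg, neg_sub]
            _ = (e₁ - e) + -(e₁ - e) := by rw [← h2]
            _ = 0 := by abel
        have h4 : (1 + α : F) = 0 :=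
          (smul_eq_zero.mp h3).resolve_right (sub_ne_zero.mpr hane)
        have hα : α = -1 := by
          have := eq_neg_of_add_eq_zero_right h4
          simpa using this
        have hβ' : β = 1 := by rw [hβ, hα]; norm_num
        have h5 : e₁ - e = e₂ - e := by
          rw [hc, hα, hβ']
          simp only [neg_smul, one_smul, neg_neg]
          abel
        exact hane₁ (sub_left_inj.mp h5).symm

lemma exists_chain (hA : IsLocallyMatrix F A) (hinf : ¬ Module.Finite F A) (a : ℕ → A) :
    ∃ (Bc : ℕ → NonUnitalSubalgebra F A) (C E : ℕ → A),
      (∀ k, IsMatrixSub F (Bc k)) ∧ Monotone Bc ∧ (∀ k, a k ∈ Bc (k + 1)) ∧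
      (∀ k, IsUnitOf (Bc k) (E k)) ∧
      (∀ k, C k ∈ Bc (k + 1)) ∧ (∀ k, ∀ x ∈ Bc k, C k * x = x * C k) ∧
      (∀ k, ∀ α β : F, C k ≠ α • E k + β • E (k + 1)) := by
  obtain ⟨B0, n0, hn0, _, f0, hf0⟩ := hA ∅
  have hstep : ∀ (p : {B : NonUnitalSubalgebra F A // IsMatrixSub F B}) (k : ℕ),
      ∃ q : {B : NonUnitalSubalgebra F A // IsMatrixSub F B}, p.1 ≤ q.1 ∧ a k ∈ q.1 ∧
        ∃ c e e' : A, IsUnitOf p.1 e ∧ IsUnitOf q.1 e' ∧ c ∈ q.1 ∧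
          (∀ x ∈ p.1, c * x = x * c) ∧ ∀ α β : F, c ≠ α • e + β • e' := by
    intro p k
    obtain ⟨B', hB', hle, hsub, c, e, e', he, he', hc, hcomm, hcond⟩ :=
      step_lemma hA hinf p.1 p.2 {a k}
    exact ⟨⟨B', hB'⟩, hle, hsub (by simp), c, e, e', he, he', hc, hcomm, hcond⟩
  choose G hle hmem c e e' hue hue' hcmem hccomm hccond using hstep
  set p : ℕ → {B : NonUnitalSubalgebra F A // IsMatrixSub F B} :=
    fun k => Nat.rec ⟨B0, ⟨n0, hn0, f0, hf0⟩⟩ (fun k ih => G ih k) k with hp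
  have hpsucc : ∀ k, p (k + 1) = G (p k) k := fun k => rfl
  set E : ℕ → A := fun k => Classical.choose (exists_isUnitOf (p k).2) with hEdef
  have hE : ∀ k, IsUnitOf (p k).1 (E k) :=
    fun k => Classical.choose_spec (exists_isUnitOf (p k).2)
  refine ⟨fun k => (p k).1, fun k => c (p k) k, E, fun k => (p k).2, ?_, ?_, hE, ?_, ?_, ?_⟩
  · exact monotone_nat_of_le_succ fun k => by rw [hpsucc k]; exact hle (p k) k
  · intro k
    have := hmem (p k) k
    rwa [← hpsucc k] at this
  · intro k
    have := hcmem (p k) k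
    rwa [← hpsucc k] at this
  · exact fun k => hccomm (p k) k
  · intro k α β
    have h1 : e (p k) k = E k := isUnitOf_unique (hue (p k) k) (hE k)
    have h2 : e' (p k) k = E (k + 1) := by
      refine isUnitOf_unique ?_ (hE (k + 1))
      rw [hpsucc k]
      exact hue' (p k) k
    have := hccond (p k) k α β
    rwa [h1, h2] at this

/-- Partial sums `∑_{j<k} ξ j • C j`. -/
def psum (C : ℕ → A) (ξ : ℕ → F) (k : ℕ) : A := ∑ j ∈ Finset.range k, ξ j • C j

lemma psum_succ (C : ℕ → A) (ξ : ℕ → F) (k : ℕ) :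
    psum C ξ (k + 1) = psum C ξ k + ξ k • C k := Finset.sum_range_succ _ _

lemma psum_add (C : ℕ → A) (ξ η : ℕ → F) (k : ℕ) :
    psum C (ξ + η) k = psum C ξ k + psum C η k := by
  simp [psum, add_smul, Finset.sum_add_distrib]

lemma psum_smul (C : ℕ → A) (r : F) (ξ : ℕ → F) (k : ℕ) :
    psum C (r • ξ) k = r • psum C ξ k := by
  simp only [psum, Finset.smul_sum]
  exact Finset.sum_congr rfl fun j _ => by
    simp [mul_smul]

/-- The candidate derivation attached to a sequence of scalars. -/
def derOf (C : ℕ → A) (lev : A → ℕ) (ξ : ℕ → F) (x : A) : A :=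
  psum C ξ (lev x) * x - x * psum C ξ (lev x)


end LMP

universe u v

/-- **Theorem 7**: for an infinite-dimensional locally matrix algebra `A` of countable
dimension over a field `F`, `dim_F Der(A) = dim_F Outder(A) = |F| ^ ℵ₀`
(cardinal exponentiation). -/
theorem rank_der_and_outder_of_locallyMatrix (F : Type u) (A : Type v) [Field F]
    [NonUnitalRing A] [Module F A] [SMulCommClass F A A] [IsScalarTower F A A]
    (hA : IsLocallyMatrix F A) (hinf : ¬ Module.Finite F A)
    (hcnt : Module.rank F A ≤ Cardinal.aleph0) :
    Cardinal.lift.{u} (Module.rank F (derSubmodule F A)) =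
      Cardinal.lift.{v} (Cardinal.mk F) ^ (Cardinal.aleph0 : Cardinal.{max u v}) ∧
    Cardinal.lift.{u} (Module.rank F (outderSpace F A)) =
      Cardinal.lift.{v} (Cardinal.mk F) ^ (Cardinal.aleph0 : Cardinal.{max u v}) := by
  classical
  have hnt : Nontrivial A := by
    by_contra h
    rw [not_nontrivial_iff_subsingleton] at h
    exact hinf (Module.finite_def.mpr ⟨∅, Subsingleton.elim _ _⟩)
  have hrk : Cardinal.aleph0 ≤ Module.rank F A := by
    by_contra h
    push_neg at h
    exact hinf (Module.rank_lt_aleph0_iff.mp h)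
  let b := Module.Basis.ofVectorSpace F A
  have hmkι : #(Module.Basis.ofVectorSpaceIndex F A) = Module.rank F A := b.mk_eq_rank''
  have hcntι : Countable (Module.Basis.ofVectorSpaceIndex F A) :=
    Cardinal.mk_le_aleph0_iff.mp (hmkι ▸ hcnt)
  have hinfι : Infinite (Module.Basis.ofVectorSpaceIndex F A) :=
    Cardinal.aleph0_le_mk_iff.mp (hmkι ▸ hrk)
  obtain ⟨sur, hsur⟩ := exists_surjective_nat (Module.Basis.ofVectorSpaceIndex F A)
  set a : ℕ → A := fun n => b (sur n) with ha
  have hspan : ∀ x : A, x ∈ Submodule.span F (Set.range a) := by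
    intro x
    have h1 : Set.range a = Set.range b := hsur.range_comp b
    rw [h1, b.span_eq]
    trivial
  obtain ⟨Bc, C, E, hmat, hmono, hamem, hE, hCmem, hCcomm, hCcond⟩ := exists_chain hA hinf a
  have hcov : ∀ x : A, ∃ k, x ∈ Bc k := by
    intro x
    refine Submodule.span_induction ?_ ?_ ?_ ?_ (hspan x)
    · rintro y ⟨n, rfl⟩
      exact ⟨n + 1, hamem n⟩
    · exact ⟨0, zero_mem _⟩
    · rintro y z _ _ ⟨k, hk⟩ ⟨l, hl⟩
      exact ⟨max k l, add_mem (hmono (le_max_left k l) hk) (hmono (le_max_right k l) hl)⟩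
    · rintro r y _ ⟨k, hk⟩
      exact ⟨k, SMulMemClass.smul_mem r hk⟩
  set lev : A → ℕ := fun x => (hcov x).choose with hlevdef
  have hlev : ∀ x : A, x ∈ Bc (lev x) := fun x => (hcov x).choose_spec
  have hpsmem : ∀ (ξ : ℕ → F) (k : ℕ), psum C ξ k ∈ Bc k := by
    intro ξ k
    refine sum_mem fun j hj => SMulMemClass.smul_mem _ ?_
    exact hmono (Finset.mem_range.mp hj) (hCmem j)
  have hkey : ∀ (ξ : ℕ → F) (k l : ℕ), k ≤ l → ∀ x ∈ Bc k,
      psum C ξ l * x - x * psum C ξ l = psum C ξ k * x - x * psum C ξ k := by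
    intro ξ k l hkl x hx
    induction l, hkl using Nat.le_induction with
    | base => rfl
    | succ l hkl ih =>
      have hCl : C l * x = x * C l := hCcomm l x (hmono hkl hx)
      rw [psum_succ, add_mul, mul_add, smul_mul_assoc, mul_smul_comm, hCl, ← ih]
      abel
  have hDval : ∀ (ξ : ℕ → F) (k : ℕ) (x : A), x ∈ Bc k →
      derOf C lev ξ x = psum C ξ k * x - x * psum C ξ k := by
    intro ξ k x hx
    show psum C ξ (lev x) * x - x * psum C ξ (lev x) = _
    rcases le_total (lev x) k with h | h
    · exact (hkey ξ (lev x) k h x (hlev x)).symm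
    · exact hkey ξ k (lev x) h x hx
  -- the linear map into the derivations
  have hder : ∀ ξ : ℕ → F, ∃ d : derSubmodule F A,
      ∀ x : A, (d : Module.End F A) x = derOf C lev ξ x := by
    intro ξ
    have hmadd : ∀ x y : A, derOf C lev ξ (x + y) = derOf C lev ξ x + derOf C lev ξ y := by
      intro x y
      set m := max (max (lev x) (lev y)) (lev (x + y)) with hm
      have hx : x ∈ Bc m := hmono (le_trans (le_max_left _ _) (le_max_left _ _)) (hlev x)
      have hy : y ∈ Bc m := hmono (le_trans (le_max_right _ _) (le_max_left _ _)) (hlev y)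
      have hxy : x + y ∈ Bc m := add_mem hx hy
      rw [hDval ξ m _ hxy, hDval ξ m _ hx, hDval ξ m _ hy, mul_add, add_mul]
      abel
    have hmsmul : ∀ (r : F) (x : A), derOf C lev ξ (r • x) = r • derOf C lev ξ x := by
      intro r x
      have hx : x ∈ Bc (lev x) := hlev x
      have hrx : r • x ∈ Bc (lev x) := SMulMemClass.smul_mem r hx
      rw [hDval ξ (lev x) _ hrx, hDval ξ (lev x) _ hx, mul_smul_comm, smul_mul_assoc,
        smul_sub]
    refine ⟨⟨⟨⟨derOf C lev ξ, hmadd⟩, fun r x => hmsmul r x⟩, ?_⟩, fun x => rfl⟩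
    intro x y
    set m := max (max (lev x) (lev y)) (lev (x * y)) with hm
    have hx : x ∈ Bc m := hmono (le_trans (le_max_left _ _) (le_max_left _ _)) (hlev x)
    have hy : y ∈ Bc m := hmono (le_trans (le_max_right _ _) (le_max_left _ _)) (hlev y)
    have hxy : x * y ∈ Bc m := mul_mem hx hy
    show derOf C lev ξ (x * y) = derOf C lev ξ x * y + x * derOf C lev ξ y
    rw [hDval ξ m _ hxy, hDval ξ m _ hx, hDval ξ m _ hy, sub_mul, mul_sub,
      mul_assoc (psum C ξ m) x y, mul_assoc x (psum C ξ m) y, ← mul_assoc x y (psum C ξ m)]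
    abel
  choose Dmap hDmap using hder
  have hDlin_add : ∀ ξ η : ℕ → F, Dmap (ξ + η) = Dmap ξ + Dmap η := by
    intro ξ η
    apply Subtype.ext
    apply LinearMap.ext
    intro x
    have h1 : ((Dmap ξ + Dmap η : derSubmodule F A) : Module.End F A) x
        = (Dmap ξ : Module.End F A) x + (Dmap η : Module.End F A) x := rfl
    rw [h1, hDmap ξ x, hDmap η x, hDmap (ξ + η) x]
    simp only [derOf]
    rw [psum_add, add_mul, mul_add]
    abel
  have hDlin_smul : ∀ (r : F) (ξ : ℕ → F), Dmap (r • ξ) = r • Dmap ξ := by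
    intro r ξ
    apply Subtype.ext
    apply LinearMap.ext
    intro x
    have h1 : ((r • Dmap ξ : derSubmodule F A) : Module.End F A) x
        = r • ((Dmap ξ : Module.End F A) x) := rfl
    rw [h1, hDmap ξ x, hDmap (r • ξ) x]
    simp only [derOf, smul_sub]
    rw [psum_smul, smul_mul_assoc, mul_smul_comm]
  set Φ : (ℕ → F) →ₗ[F] derSubmodule F A :=
    { toFun := Dmap, map_add' := hDlin_add, map_smul' := hDlin_smul } with hΦ
  set ψ : (ℕ → F) →ₗ[F] outderSpace F A :=
    (innerSubmodule F A).mkQ.comp Φ with hψ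
  -- kernel of ψ consists of eventually-zero sequences
  have hker : ∀ ξ : ℕ → F, ξ ∈ LinearMap.ker ψ → ∃ m : ℕ, ∀ k, m ≤ k → ξ k = 0 := by
    intro ξ hξ
    have hmem : Φ ξ ∈ innerSubmodule F A := by
      have := LinearMap.mem_ker.mp hξ
      rw [hψ] at this
      exact (Submodule.Quotient.mk_eq_zero _).mp this
    obtain ⟨b0, hb0⟩ := hmem
    obtain ⟨m, hm⟩ := hcov b0
    refine ⟨m, fun k hk => ?_⟩
    have hz : ∀ l, m ≤ l → ∃ μ : F, b0 - psum C ξ l = μ • E l := by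
      intro l hl
      refine eq_smul_unit_of_comm (hmat l) (hE l)
        (sub_mem (hmono hl hm) (hpsmem ξ l)) ?_
      intro x hx
      have h1 : (Φ ξ : Module.End F A) x = derOf C lev ξ x := hDmap ξ x
      have h2 : (Φ ξ : Module.End F A) x = b0 * x - x * b0 := by
        rw [hb0]
        simp [adEnd, LinearMap.sub_apply, LinearMap.mulLeft_apply, LinearMap.mulRight_apply]
      have h3 : b0 * x - x * b0 = psum C ξ l * x - x * psum C ξ l := by
        rw [← h2, h1, hDval ξ l x hx]
      have h5 : (b0 * x - x * b0) - (psum C ξ l * x - x * psum C ξ l)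
          = (b0 * x - psum C ξ l * x) - (x * b0 - x * psum C ξ l) := by abel
      rw [h3, sub_self] at h5
      have h6 := sub_eq_zero.mp h5.symm
      rw [sub_mul, mul_sub]
      exact h6
    obtain ⟨μ, hμ⟩ := hz k hk
    obtain ⟨ν, hν⟩ := hz (k + 1) (le_trans hk (Nat.le_succ k))
    have hdiff : ξ k • C k = μ • E k + (-ν) • E (k + 1) := by
      have h7 : (b0 - psum C ξ k) - (b0 - psum C ξ (k + 1)) = ξ k • C k := by
        rw [psum_succ]
        abel
      rw [hμ, hν] at h7
      rw [← h7, neg_smul]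
      abel
    by_contra hξk
    apply hCcond k ((ξ k)⁻¹ * μ) ((ξ k)⁻¹ * (-ν))
    calc C k = (ξ k)⁻¹ • (ξ k • C k) := (inv_smul_smul₀ hξk _).symm
      _ = (ξ k)⁻¹ • (μ • E k + (-ν) • E (k + 1)) := by rw [hdiff]
      _ = ((ξ k)⁻¹ * μ) • E k + ((ξ k)⁻¹ * (-ν)) • E (k + 1) := by
          rw [smul_add, smul_smul, smul_smul]
  -- rank bookkeeping
  set K := LinearMap.ker ψ with hK
  have hKle : K ≤ Submodule.span F (Set.range fun j : ℕ => (Pi.single j (1 : F) : ℕ → F)) := by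
    intro ξ hξ
    obtain ⟨m, hm⟩ := hker ξ hξ
    have hξeq : ξ = ∑ j ∈ Finset.range m, ξ j • (Pi.single j (1 : F) : ℕ → F) := by
      funext n
      rw [Finset.sum_apply]
      by_cases hn : n < m
      · rw [Finset.sum_eq_single_of_mem n (Finset.mem_range.mpr hn)]
        · simp
        · intro j _ hj
          simp [Pi.single_apply, Ne.symm hj]
      · push_neg at hn
        rw [hm n hn, Finset.sum_eq_zero]
        intro j hj
        have : j ≠ n := by
          intro h
          exact absurd (Finset.mem_range.mp hj) (by omega)
        simp [Pi.single_apply, Ne.symm this]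
    rw [hξeq]
    exact sum_mem fun j _ => Submodule.smul_mem _ _ (Submodule.subset_span ⟨j, rfl⟩)
  have hrankK : Module.rank F K ≤ Cardinal.aleph0 := by
    refine le_trans (Submodule.rank_mono hKle) (le_trans (rank_span_le _) ?_)
    have : (Set.range fun j : ℕ => (Pi.single j (1 : F) : ℕ → F)).Countable :=
      Set.countable_range _
    have := this.to_subtype
    exact Cardinal.mk_le_aleph0
  have hEK : Module.rank F (ℕ → F) = (#F) ^ (Cardinal.aleph0 : Cardinal.{u}) := by
    rw [rank_fun_infinite, Cardinal.mk_arrow, Cardinal.lift_uzero, Cardinal.mk_nat,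
      Cardinal.lift_aleph0]
  have hbig : (Cardinal.aleph0 : Cardinal.{u}) < (#F) ^ (Cardinal.aleph0 : Cardinal.{u}) := by
    refine lt_of_lt_of_le (Cardinal.cantor Cardinal.aleph0) ?_
    exact Cardinal.power_le_power_right (Cardinal.two_le_iff.mpr (exists_pair_ne F))
  have hq := rank_quotient_add_rank_of_divisionRing K
  have hrankQ : Module.rank F ((ℕ → F) ⧸ K) = (#F) ^ (Cardinal.aleph0 : Cardinal.{u}) := by
    refine le_antisymm ?_ ?_
    · rw [← hEK]
      exact rank_quotient_le K
    · by_contra h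
      push_neg at h
      have hlt := Cardinal.add_lt_of_lt (le_of_lt hbig) h (lt_of_le_of_lt hrankK hbig)
      rw [hq, hEK] at hlt
      exact lt_irrefl _ hlt
  -- lower bound for the space of outer derivations
  have hlow : Cardinal.lift.{v} ((#F) ^ (Cardinal.aleph0 : Cardinal.{u}))
      ≤ Cardinal.lift.{u} (Module.rank F (outderSpace F A)) := by
    have e1 : ((ℕ → F) ⧸ K) ≃ₗ[F] LinearMap.range ψ := ψ.quotKerEquivRange
    have h2 := e1.lift_rank_eq
    rw [hrankQ] at h2
    rw [h2]
    exact Cardinal.lift_le.mpr (Submodule.rank_le _)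
  -- upper bound for the space of derivations
  obtain ⟨injι, hinjι⟩ := exists_injective_nat (Module.Basis.ofVectorSpaceIndex F A)
  set φ : A →ₗ[F] (ℕ → F) :=
    (Finsupp.lcoeFun.comp (Finsupp.lmapDomain F F injι)).comp (b.repr : A ≃ₗ[F] _).toLinearMap
    with hφdef
  have hφ : Function.Injective φ := by
    intro u v huv
    exact b.repr.injective (Finsupp.mapDomain_injective hinjι (DFunLike.coe_injective huv))
  set χ : Module.End F A →ₗ[F] (ℕ → ℕ → F) :=
    { toFun := fun f => fun n => φ (f (a n)),
      map_add' := by intro f g; funext n; simp,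
      map_smul' := by intro r f; funext n; simp } with hχdef
  have hχ : Function.Injective χ := by
    intro f g hfg
    apply LinearMap.ext
    intro x
    have hfg' : ∀ n, f (a n) = g (a n) := by
      intro n
      exact hφ (congrFun hfg n)
    refine Submodule.span_induction ?_ ?_ ?_ ?_ (hspan x)
    · rintro y ⟨n, rfl⟩
      exact hfg' n
    · rw [map_zero, map_zero]
    · intro y z _ _ hy hz
      rw [map_add, map_add, hy, hz]
    · intro r y _ hy
      rw [map_smul, map_smul, hy]
  have hup1 : Cardinal.lift.{u} (Module.rank F (Module.End F A))
      ≤ Cardinal.lift.{v} (Module.rank F (ℕ → ℕ → F)) :=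
    χ.lift_rank_le_of_injective hχ
  have hrank2 : Module.rank F (ℕ → ℕ → F) = (#F) ^ (Cardinal.aleph0 : Cardinal.{u}) := by
    have e2 : (ℕ × ℕ → F) ≃ₗ[F] (ℕ → ℕ → F) :=
      LinearEquiv.curry (R := F) (M := F) (V := ℕ) (V₂ := ℕ)
    have e3 : (ℕ × ℕ → F) ≃ₗ[F] (ℕ → F) :=
      LinearEquiv.funCongrLeft F F (Denumerable.eqv (ℕ × ℕ)).symm
    rw [← e2.rank_eq, e3.rank_eq, hEK]
  have hupDer : Cardinal.lift.{u} (Module.rank F (derSubmodule F A))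
      ≤ Cardinal.lift.{v} ((#F) ^ (Cardinal.aleph0 : Cardinal.{u})) := by
    refine le_trans (Cardinal.lift_le.mpr (Submodule.rank_le _)) ?_
    rw [← hrank2]
    exact hup1
  have hOutDer : Cardinal.lift.{u} (Module.rank F (outderSpace F A))
      ≤ Cardinal.lift.{u} (Module.rank F (derSubmodule F A)) :=
    Cardinal.lift_le.mpr (rank_quotient_le _)
  have hT : Cardinal.lift.{v} ((#F) ^ (Cardinal.aleph0 : Cardinal.{u}))
      = Cardinal.lift.{v} (#F) ^ (Cardinal.aleph0 : Cardinal.{max u v}) := by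
    rw [Cardinal.lift_power, Cardinal.lift_aleph0]
  have hderEq : Cardinal.lift.{u} (Module.rank F (derSubmodule F A))
      = Cardinal.lift.{v} (#F) ^ (Cardinal.aleph0 : Cardinal.{max u v}) := by
    rw [← hT]
    exact le_antisymm hupDer (le_trans hlow hOutDer)
  have houtEq : Cardinal.lift.{u} (Module.rank F (outderSpace F A))
      = Cardinal.lift.{v} (#F) ^ (Cardinal.aleph0 : Cardinal.{max u v}) := by
    rw [← hT]
    exact le_antisymm (le_trans hOutDer hupDer) hlow
  exact ⟨hderEq, houtEq⟩
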